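/- Let N, L ≥ 1, 0 < γ < 1 and ω ∈ S^2, and let (τ,ξ) satisfy ⟨ξ⟩ ∼ N, θ(±ξ, ω) ≤ γ and ⟨τ ± |ξ|⟩ ∼ L. Then |τ + ξ·ω| ≲ max(L, Nγ²), with an absolute implicit constant; that is, the thickened angular sector of the null cone K^±_{N,L,γ,ω} is contained in the null-hyperplane slab H_{max(L,Nγ²)}(ω) = {(τ,ξ) : |τ + ξ·ω| ≲ max(L,Nγ²)}. -/

import Mathlib

open InnerProductGeometry
open scoped RealInnerProductSpace

theorem sector_subset_null_slab :
    ∃ C : ℝ, 0 < C ∧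
      ∀ (sgn : ℝ), (sgn = 1 ∨ sgn = -1) →
      ∀ (N L γ : ℝ) (ω : EuclideanSpace ℝ (Fin 3)) (τ : ℝ)
        (ξ : EuclideanSpace ℝ (Fin 3)),
        1 ≤ N → 1 ≤ L → 0 < γ → γ < 1 → ‖ω‖ = 1 → ξ ≠ 0 →
        N ≤ 2 * Real.sqrt (1 + ‖ξ‖ ^ 2) → Real.sqrt (1 + ‖ξ‖ ^ 2) ≤ 2 * N →
        angle (sgn • ξ) ω ≤ γ →
        L ≤ 2 * Real.sqrt (1 + (τ + sgn * ‖ξ‖) ^ 2) →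
        Real.sqrt (1 + (τ + sgn * ‖ξ‖) ^ 2) ≤ 2 * L →
        |τ + ∑ i : Fin 3, ξ i * ω i| ≤ C * max L (N * γ ^ 2) := by
  refine ⟨3, by norm_num, ?_⟩
  intro sgn hsgn N L γ ω τ ξ hN hL hγ0 hγ1 hω hξ0 hN1 hN2 hang hL1 hL2
  have hsgn2 : sgn * sgn = 1 := by rcases hsgn with h | h <;> simp [h]
  have habs : |sgn| = 1 := by rcases hsgn with h | h <;> simp [h]
  set θ := angle (sgn • ξ) ω with hθ
  have hθ0 : 0 ≤ θ := angle_nonneg _ _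
  set ip : ℝ := inner ℝ ξ ω with hip
  have hξpos : (0:ℝ) < ‖ξ‖ := norm_pos_iff.mpr hξ0
  have hcos : Real.cos θ = (sgn * ip) / ‖ξ‖ := by
    rw [hθ, InnerProductGeometry.cos_angle, real_inner_smul_left, norm_smul,
      Real.norm_eq_abs, habs, hω]
    simp [hip]
  have hinner : sgn * ip = ‖ξ‖ * Real.cos θ := by
    rw [hcos]; field_simp
  have hcoslb : 1 - γ ^ 2 / 2 ≤ Real.cos θ := by
    have h1 : 1 - θ ^ 2 / 2 ≤ Real.cos θ := Real.one_sub_sq_div_two_le_cos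
    have h2 : θ ^ 2 ≤ γ ^ 2 := by nlinarith
    linarith
  have hsum : ∑ i : Fin 3, ξ i * ω i = ip := by
    simp [hip, PiLp.inner_apply, RCLike.inner_apply, mul_comm]
  have hx : |τ + sgn * ‖ξ‖| ≤ 2 * L := by
    calc |τ + sgn * ‖ξ‖| = Real.sqrt ((τ + sgn * ‖ξ‖) ^ 2) := (Real.sqrt_sq_eq_abs _).symm
    _ ≤ Real.sqrt (1 + (τ + sgn * ‖ξ‖) ^ 2) := Real.sqrt_le_sqrt (by linarith)
    _ ≤ 2 * L := hL2
  have hξbd : ‖ξ‖ ≤ 2 * N := by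
    calc ‖ξ‖ = Real.sqrt (‖ξ‖ ^ 2) := by rw [Real.sqrt_sq hξpos.le]
    _ ≤ Real.sqrt (1 + ‖ξ‖ ^ 2) := Real.sqrt_le_sqrt (by linarith)
    _ ≤ 2 * N := hN2
  have hcosub : Real.cos θ ≤ 1 := Real.cos_le_one θ
  have hXnn : 0 ≤ ‖ξ‖ - ‖ξ‖ * Real.cos θ := by nlinarith
  have key : |τ + ip| ≤ |τ + sgn * ‖ξ‖| + ‖ξ‖ * (1 - Real.cos θ) := by
    have heq : τ + ip = (τ + sgn * ‖ξ‖) - sgn * (‖ξ‖ - ‖ξ‖ * Real.cos θ) := by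
      have h : ip = sgn * (‖ξ‖ * Real.cos θ) := by
        calc ip = sgn * sgn * ip := by rw [hsgn2]; ring
        _ = sgn * (sgn * ip) := by ring
        _ = sgn * (‖ξ‖ * Real.cos θ) := by rw [hinner]
      rw [h]; ring
    rw [heq]
    calc |(τ + sgn * ‖ξ‖) - sgn * (‖ξ‖ - ‖ξ‖ * Real.cos θ)|
        ≤ |τ + sgn * ‖ξ‖| + |sgn * (‖ξ‖ - ‖ξ‖ * Real.cos θ)| := abs_sub _ _
    _ = |τ + sgn * ‖ξ‖| + ‖ξ‖ * (1 - Real.cos θ) := by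
        rw [abs_mul, habs, one_mul, abs_of_nonneg hXnn]; ring
  rw [hsum]
  calc |τ + ip| ≤ |τ + sgn * ‖ξ‖| + ‖ξ‖ * (1 - Real.cos θ) := key
  _ ≤ 2 * L + (2 * N) * (γ ^ 2 / 2) := by
      have h1 : ‖ξ‖ * (1 - Real.cos θ) ≤ (2 * N) * (γ ^ 2 / 2) := by nlinarith
      linarith
  _ = 2 * L + N * γ ^ 2 := by ring
  _ ≤ 3 * max L (N * γ ^ 2) := by
      have := le_max_left L (N * γ ^ 2)
      have := le_max_right L (N * γ ^ 2)
      linarith
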